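/- Let A be a bineighborly real central hyperplane arrangement with fundamental chamber c₀, so the chamber poset P(A,c₀) is a lattice. Then for all chambers x, y, the separation set S(c₀, x ∨ y) equals the 2-closure of S(c₀,x) ∪ S(c₀,y). -/

import Mathlib

open Matrix
open scoped Classical

/-- Ambient space: `ℝⁿ`. -/
abbrev V (n : ℕ) := Fin n → ℝ

/-- The linear functional `x ↦ v ⬝ᵥ x` determined by a normal vector. -/
def hypl {n : ℕ} (v : V n) : V n →ₗ[ℝ] ℝ where
  toFun x := v ⬝ᵥ x
  map_add' x y := by simp [dotProduct_add]
  map_smul' c x := by simp [dotProduct_smul]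

/-- Two normal vectors define the same hyperplane. -/
def SameHyp {n : ℕ} (u w : V n) : Prop := ∀ x, u ⬝ᵥ x = 0 ↔ w ⬝ᵥ x = 0

/-- A finite set of normal vectors represents a (central) hyperplane arrangement
if each normal is nonzero and distinct normals define distinct hyperplanes. -/
def IsArrangement {n : ℕ} (A : Finset (V n)) : Prop :=
  (∀ v ∈ A, v ≠ 0) ∧ ∀ u ∈ A, ∀ w ∈ A, SameHyp u w → u = w

/-- The point `x` realizes the sign vector `c` on the arrangement `A`. -/
def Realizes {n : ℕ} (A : Finset (V n)) (c : V n → Bool) (x : V n) : Prop :=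
  ∀ v ∈ A, if c v then 0 < v ⬝ᵥ x else v ⬝ᵥ x < 0

/-- A chamber of `A`, encoded by its sign vector. -/
def IsChamber {n : ℕ} (A : Finset (V n)) (c : V n → Bool) : Prop :=
  ∃ x, Realizes A c x

/-- The separation set of two chambers: hyperplanes on which their signs differ. -/
noncomputable def SepSet {n : ℕ} (A : Finset (V n)) (c d : V n → Bool) : Finset (V n) :=
  A.filter (fun v => c v ≠ d v)

/-- The localization of `A` at the subspace `ker u ∩ ker w`:
hyperplanes containing this subspace. -/
noncomputable def loc {n : ℕ} (A : Finset (V n)) (u w : V n) : Finset (V n) :=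
  A.filter (fun v => ∀ x, u ⬝ᵥ x = 0 → w ⬝ᵥ x = 0 → v ⬝ᵥ x = 0)

/-- `u, w` span a codimension-2 intersection subspace `ker u ∩ ker w` of `A`. -/
def Codim2 {n : ℕ} (A : Finset (V n)) (u w : V n) : Prop :=
  u ∈ A ∧ w ∈ A ∧ LinearIndependent ℝ ![u, w]

/-- `I` is biclosed w.r.t. the chamber `c₀`: its intersection with each rank-2
localization is the separation set of some chamber of the localization. -/
def IsBiclosed {n : ℕ} (A : Finset (V n)) (c₀ : V n → Bool) (I : Finset (V n)) : Prop :=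
  ∀ u w, Codim2 A u w →
    ∃ d, IsChamber (loc A u w) d ∧ I ∩ loc A u w = SepSet (loc A u w) c₀ d

/-- `I ⊆ A` is convex with respect to `c₀`. -/
def IsConvex {n : ℕ} (A : Finset (V n)) (c₀ : V n → Bool) (I : Finset (V n)) : Prop :=
  ∀ H ∈ A \ I, ∃ e, IsChamber A e ∧ H ∈ SepSet A c₀ e ∧ SepSet A c₀ e ⊆ A \ I

/-- `I` is 2-closed: its intersection with each rank-2 localization is convex there. -/
def Is2Closed {n : ℕ} (A : Finset (V n)) (c₀ : V n → Bool) (I : Finset (V n)) : Prop :=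
  ∀ u w, Codim2 A u w → IsConvex (loc A u w) c₀ (I ∩ loc A u w)

/-- `v` is a wall of the chamber `c`: some point of the closure of `c` lies on the
hyperplane of `v` and strictly off every other hyperplane of `A`. -/
def IsWall {n : ℕ} (A : Finset (V n)) (c : V n → Bool) (v : V n) : Prop :=
  v ∈ A ∧ ∃ x, v ⬝ᵥ x = 0 ∧ ∀ w ∈ A, ¬ SameHyp v w →
    (if c w then 0 < w ⬝ᵥ x else w ⬝ᵥ x < 0)

/-- The sign vector `v` is feasible: some point satisfies all its strict constraints. -/
def Feasible {n : ℕ} (A : Finset (V n)) (v : V n → SignType) : Prop :=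
  ∃ x : V n, ∀ h ∈ A, (v h = 1 → 0 < h ⬝ᵥ x) ∧ (v h = -1 → h ⬝ᵥ x < 0)

/-- A circuit of `A`: a minimal nonzero infeasible sign vector supported on `A`. -/
def IsCircuit {n : ℕ} (A : Finset (V n)) (v : V n → SignType) : Prop :=
  (∀ h, v h ≠ 0 → h ∈ A) ∧ (∃ h, v h ≠ 0) ∧ ¬ Feasible A v ∧
    ∀ w : V n → SignType, (∀ h, w h ≠ 0 → w h = v h) →
      {h | w h ≠ 0} ⊂ {h | v h ≠ 0} → Feasible A w

/-- A reduced gallery from `c₀` to `-c₀` in `A`, crossing hyperplanes `H 0, H 1, …`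
in order. -/
def IsGallery {n N : ℕ} (A : Finset (V n)) (c₀ : V n → Bool) (H : Fin N → V n)
    (d : Fin (N + 1) → V n → Bool) : Prop :=
  (∀ i, IsChamber A (d i)) ∧ d 0 = c₀ ∧ (∀ v ∈ A, d (Fin.last N) v = !c₀ v) ∧
    ∀ i : Fin N, SepSet A (d i.castSucc) (d i.succ) = {H i}

/-- The enumeration `H` of `A` is admissible: on every rank-2 localization, the
induced order is the crossing order of some reduced gallery of the localization. -/
def Admissible {n N : ℕ} (A : Finset (V n)) (c₀ : V n → Bool) (H : Fin N → V n) : Prop :=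
  ∀ u w, Codim2 A u w →
    ∃ (M : ℕ) (G : Fin M → V n) (e : Fin (M + 1) → V n → Bool) (φ : Fin M → Fin N),
      IsGallery (loc A u w) c₀ G e ∧ StrictMono φ ∧ ∀ k, G k = H (φ k)

/-- The intersection lattice of `A`, as a set of subspaces of `ℝⁿ`. -/
def InterLattice {n : ℕ} (A : Finset (V n)) : Set (Submodule ℝ (V n)) :=
  {X | ∃ S : Finset (V n), S ⊆ A ∧ X = S.inf (fun v => LinearMap.ker (hypl v))}

/-- A modular element of the intersection lattice of `A`. -/
def IsModular {n : ℕ} (A : Finset (V n)) (X : Submodule ℝ (V n)) : Prop :=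
  X ∈ InterLattice A ∧ ∀ Y ∈ InterLattice A, X ⊔ Y ∈ InterLattice A

/-- The rank of the arrangement `A`. -/
noncomputable def rankA {n : ℕ} (A : Finset (V n)) : ℕ :=
  Module.finrank ℝ (Submodule.span ℝ (A : Set (V n)))

/-- A modular flag: a maximal chain `⊤ = X 0 > X 1 > ⋯ > X r` of modular
elements of the intersection lattice, with `X i` of codimension `i`. -/
def IsModularFlag {n : ℕ} (A : Finset (V n)) (X : Fin (rankA A + 1) → Submodule ℝ (V n)) : Prop :=
  X 0 = ⊤ ∧ (∀ i, IsModular A (X i)) ∧ (∀ i j, i ≤ j → X j ≤ X i) ∧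
    ∀ i : Fin (rankA A + 1), Module.finrank ℝ (X i) = n - (i : ℕ)

/-- `A` is supersolvable: its intersection lattice has a modular flag. -/
def IsSupersolvable {n : ℕ} (A : Finset (V n)) : Prop :=
  ∃ X : Fin (rankA A + 1) → Submodule ℝ (V n), IsModularFlag A X

/-- The chamber `c` is incident to the subspace `X`:  some point of `X` lies in the
closure of `c` and strictly off every hyperplane of `A` not containing `X`. -/
def IncidentSub {n : ℕ} (A : Finset (V n)) (c : V n → Bool) (X : Submodule ℝ (V n)) : Prop :=
  ∃ x, x ∈ X ∧ ∀ v ∈ A, ¬ X ≤ LinearMap.ker (hypl v) →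
    (if c v then 0 < v ⬝ᵥ x else v ⬝ᵥ x < 0)

/-- The chamber `c` is incident to the codimension-2 subspace `ker u ∩ ker w`. -/
def IncidentLoc {n : ℕ} (A : Finset (V n)) (c : V n → Bool) (u w : V n) : Prop :=
  ∃ x, (∀ v ∈ loc A u w, v ⬝ᵥ x = 0) ∧ ∀ v ∈ A, v ∉ loc A u w →
    (if c v then 0 < v ⬝ᵥ x else v ⬝ᵥ x < 0)

/-- `(A, c₀)` is bineighborly: any chamber is incident to the intersection of any two
of its walls separating it from `-c₀`. -/
def Bineighborly {n : ℕ} (A : Finset (V n)) (c₀ : V n → Bool) : Prop :=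
  ∀ c, IsChamber A c → ∀ u w, IsWall A c u → IsWall A c w →
    u ∈ SepSet A c (fun v => !c₀ v) → w ∈ SepSet A c (fun v => !c₀ v) → IncidentLoc A c u w

/-- Every chamber of `A` is a simplicial cone: its walls are linearly independent
and span the same subspace as `A`. -/
def IsSimplicial {n : ℕ} (A : Finset (V n)) : Prop :=
  ∀ c, IsChamber A c →
    LinearIndependent ℝ ((↑) : {v // IsWall A c v} → V n) ∧
      Submodule.span ℝ {v | IsWall A c v} = Submodule.span ℝ (A : Set (V n))

section Aux
variable {n : ℕ}

private lemma bNeNot : ∀ a b : Bool, (a ≠ !b) ↔ a = b := by decide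

private lemma sameHyp_refl (v : V n) : SameHyp v v := fun _ => Iff.rfl

private lemma realizes_ne {A : Finset (V n)} {c : V n → Bool} {x v : V n}
    (h : Realizes A c x) (hv : v ∈ A) : v ⬝ᵥ x ≠ 0 := by
  have h1 := h v hv
  by_cases hc : c v = true
  · rw [if_pos hc] at h1; exact ne_of_gt h1
  · rw [if_neg hc] at h1; exact ne_of_lt h1

private lemma realizes_subset {A B : Finset (V n)} {c : V n → Bool} {x : V n}
    (hBA : B ⊆ A) (h : Realizes A c x) : Realizes B c x := fun v hv => h v (hBA hv)

private lemma realizes_pos {A : Finset (V n)} {c : V n → Bool} {x v : V n}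
    (h : Realizes A c x) (hv : v ∈ A) (hc : c v = true) : 0 < v ⬝ᵥ x := by
  have h1 := h v hv; rwa [if_pos hc] at h1

private lemma realizes_negval {A : Finset (V n)} {c : V n → Bool} {x v : V n}
    (h : Realizes A c x) (hv : v ∈ A) (hc : c v = false) : v ⬝ᵥ x < 0 := by
  have h1 := h v hv; rwa [if_neg (by simp [hc])] at h1

private lemma realizes_neg {A : Finset (V n)} {c : V n → Bool} {x : V n}
    (h : Realizes A c x) : Realizes A (fun v => !(c v)) (-x) := by
  intro v hv
  cases hcv : c v
  · have h1 := realizes_negval h hv hcv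
    simp only [hcv, Bool.not_false, if_true, dotProduct_neg, ite_true]
    linarith
  · have h1 := realizes_pos h hv hcv
    simp only [hcv, Bool.not_true, Bool.false_eq_true, if_false, dotProduct_neg, ite_false]
    linarith

private lemma mem_sep {A : Finset (V n)} {c d : V n → Bool} {v : V n} :
    v ∈ SepSet A c d ↔ v ∈ A ∧ c v ≠ d v := by
  simp [SepSet]

private lemma sep_subset (A : Finset (V n)) (c d : V n → Bool) : SepSet A c d ⊆ A :=
  Finset.filter_subset _ _

private lemma sep_comm (A : Finset (V n)) (c d : V n → Bool) : SepSet A c d = SepSet A d c := by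
  ext v; simp [mem_sep, ne_comm]

private lemma sep_self (A : Finset (V n)) (c : V n → Bool) : SepSet A c c = ∅ := by
  ext v; simp [mem_sep]

private lemma arr_subset {A B : Finset (V n)} (hA : IsArrangement A) (h : B ⊆ A) :
    IsArrangement B :=
  ⟨fun v hv => hA.1 v (h hv), fun u hu w hw hs => hA.2 u (h hu) w (h hw) hs⟩

private lemma not_dep {A : Finset (V n)} (hA : IsArrangement A) {u w : V n}
    (hu : u ∈ A) (hw : w ∈ A) (huw : u ≠ w) {a b : ℝ}
    (h : a • u + b • w = 0) : a = 0 ∧ b = 0 := by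
  by_cases hb : b = 0
  · subst hb
    simp only [zero_smul, add_zero] at h
    rcases smul_eq_zero.1 h with h' | h'
    · exact ⟨h', rfl⟩
    · exact absurd h' (hA.1 u hu)
  · exfalso
    have h2 : b • w = (-a) • u := by
      rw [neg_smul, eq_neg_iff_add_eq_zero, add_comm]; exact h
    have h1 : w = (b⁻¹ * (-a)) • u := by
      rw [mul_smul, ← h2, smul_smul, inv_mul_cancel₀ hb, one_smul]
    set cm := b⁻¹ * (-a) with hcm
    have hcm0 : cm ≠ 0 := by
      intro h0
      rw [h0, zero_smul] at h1
      exact hA.1 w hw h1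
    have hsam : SameHyp u w := by
      intro x
      rw [h1, smul_dotProduct, smul_eq_mul]
      constructor
      · intro h0; rw [h0, mul_zero]
      · intro h0; exact (mul_eq_zero.1 h0).resolve_left hcm0
    exact huw (hA.2 u hu w hw hsam)

private lemma dot_self_pos {v : V n} (hv : v ≠ 0) : 0 < v ⬝ᵥ v := by
  have h1 : v ⬝ᵥ v ≠ 0 := fun h => hv (dotProduct_self_eq_zero.1 h)
  have h2 : 0 ≤ v ⬝ᵥ v := by
    rw [dotProduct]
    exact Finset.sum_nonneg fun i _ => mul_self_nonneg _
  exact lt_of_le_of_ne h2 (Ne.symm h1)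

private lemma small_perturb (T : Finset (V n)) (z ξ : V n) (hz : ∀ w ∈ T, w ⬝ᵥ z ≠ 0) :
    ∃ ε : ℝ, 0 < ε ∧ ∀ ε' : ℝ, 0 < ε' → ε' ≤ ε → ∀ w ∈ T,
      (0 < w ⬝ᵥ z → 0 < w ⬝ᵥ (z + ε' • ξ)) ∧ (w ⬝ᵥ z < 0 → w ⬝ᵥ (z + ε' • ξ) < 0) := by
  classical
  induction T using Finset.induction_on with
  | empty => exact ⟨1, one_pos, by simp⟩
  | @insert a s ha ih =>
    obtain ⟨ε, hε, hind⟩ := ih (fun w hw => hz w (Finset.mem_insert_of_mem hw))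
    have hza : a ⬝ᵥ z ≠ 0 := hz a (Finset.mem_insert_self _ _)
    have hδpos : 0 < |a ⬝ᵥ z| / (|a ⬝ᵥ ξ| + 1) := by positivity
    refine ⟨min ε (|a ⬝ᵥ z| / (|a ⬝ᵥ ξ| + 1)), lt_min hε hδpos, ?_⟩
    intro ε' hε'0 hε'le w hw
    have hexp : w ⬝ᵥ (z + ε' • ξ) = w ⬝ᵥ z + ε' * (w ⬝ᵥ ξ) := by
      simp [dotProduct_add, dotProduct_smul, smul_eq_mul]
    rcases Finset.mem_insert.1 hw with rfl | hw'
    · have h1 : ε' ≤ |w ⬝ᵥ z| / (|w ⬝ᵥ ξ| + 1) := le_trans hε'le (min_le_right _ _)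
      have hbound : |ε' * (w ⬝ᵥ ξ)| < |w ⬝ᵥ z| := by
        rw [abs_mul, abs_of_pos hε'0]
        have h4 : ε' * (|w ⬝ᵥ ξ| + 1) ≤ |w ⬝ᵥ z| := by
          rw [← le_div_iff₀ (by positivity)]
          exact h1
        nlinarith [abs_nonneg (w ⬝ᵥ ξ)]
      constructor <;> intro hsign <;> rw [hexp]
      · have := neg_abs_le (ε' * (w ⬝ᵥ ξ))
        rw [abs_of_pos hsign] at hbound
        linarith
      · have := le_abs_self (ε' * (w ⬝ᵥ ξ))
        rw [abs_of_neg hsign] at hbound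
        linarith
    · exact hind ε' hε'0 (le_trans hε'le (min_le_left _ _)) w hw'

private lemma exists_generic {A : Finset (V n)} {c : V n → Bool} {x : V n}
    (h : Realizes A c x) (S : Finset (V n)) (hS : ∀ l ∈ S, l ≠ 0) :
    ∃ x', Realizes A c x' ∧ ∀ l ∈ S, l ⬝ᵥ x' ≠ 0 := by
  classical
  induction S using Finset.induction_on with
  | empty => exact ⟨x, h, by simp⟩
  | @insert l s hl ih =>
    obtain ⟨x', hx', hS'⟩ := ih (fun l' hl' => hS l' (Finset.mem_insert_of_mem hl'))
    by_cases h0 : l ⬝ᵥ x' = 0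
    · obtain ⟨ε, hε, hp⟩ := small_perturb (A ∪ s) x' l (fun w hw => by
        rcases Finset.mem_union.1 hw with hw | hw
        · exact realizes_ne hx' hw
        · exact hS' w hw)
      refine ⟨x' + ε • l, ?_, ?_⟩
      · intro v hv
        have hvi := hx' v hv
        have hpres := hp ε hε le_rfl v (Finset.mem_union_left _ hv)
        by_cases hcv : c v = true
        · rw [if_pos hcv] at hvi ⊢; exact hpres.1 hvi
        · rw [if_neg hcv] at hvi ⊢; exact hpres.2 hvi
      · intro l' hl'
        rcases Finset.mem_insert.1 hl' with rfl | hl''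
        · have hexp : l' ⬝ᵥ (x' + ε • l') = l' ⬝ᵥ x' + ε * (l' ⬝ᵥ l') := by
            simp [dotProduct_add, dotProduct_smul, smul_eq_mul]
          rw [hexp, h0, zero_add]
          exact mul_ne_zero (ne_of_gt hε)
            (ne_of_gt (dot_self_pos (hS l' (Finset.mem_insert_self _ _))))
        · have hpres := hp ε hε le_rfl l' (Finset.mem_union_right _ hl'')
          have hne := hS' l' hl''
          rcases lt_or_gt_of_ne hne with hlt | hgt
          · exact ne_of_lt (hpres.2 hlt)
          · exact ne_of_gt (hpres.1 hgt)
    · exact ⟨x', hx', fun l' hl' => by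
        rcases Finset.mem_insert.1 hl' with rfl | h'
        exacts [h0, hS' l' h']⟩

private lemma dot_seg (v p q : V n) (t : ℝ) :
    v ⬝ᵥ (p + t • (q - p)) = v ⬝ᵥ p + t * (v ⬝ᵥ q - v ⬝ᵥ p) := by
  simp [dotProduct_add, dotProduct_smul, dotProduct_sub, smul_eq_mul]

private lemma cross_pos {a b : ℝ} (h : a * b < 0) : 0 < a / (a - b) ∧ a / (a - b) < 1 := by
  rcases mul_neg_iff.1 h with ⟨ha, hb⟩ | ⟨ha, hb⟩
  · have hd : 0 < a - b := by linarith
    exact ⟨div_pos ha hd, by rw [div_lt_one hd]; linarith⟩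
  · have hd : 0 < b - a := by linarith
    have he : a / (a - b) = (-a) / (b - a) := by
      rw [← neg_div_neg_eq, neg_sub]
    rw [he]
    exact ⟨div_pos (by linarith) hd, by rw [div_lt_one hd]; linarith⟩

private lemma cross_zero {a b : ℝ} (h : a * b < 0) : a + (a / (a - b)) * (b - a) = 0 := by
  have hne : a - b ≠ 0 := by
    rcases mul_neg_iff.1 h with ⟨ha, hb⟩ | ⟨ha, hb⟩ <;> intro h0 <;> nlinarith
  field_simp
  ring

private lemma seg_sign_same {a b t : ℝ} (h : 0 < a * b) (ht0 : 0 ≤ t) (ht1 : t ≤ 1) :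
    0 < a * (a + t * (b - a)) := by
  by_cases ht : t = 0
  · subst ht
    have ha : a ≠ 0 := by rintro rfl; simp at h
    simpa using mul_self_pos.2 ha
  · have htpos : 0 < t := lt_of_le_of_ne ht0 (Ne.symm ht)
    nlinarith [mul_pos htpos h, mul_nonneg (sub_nonneg.2 ht1) (sq_nonneg a)]

private lemma seg_sign_lt {a b t : ℝ} (h : a * b < 0) (ht0 : 0 ≤ t) (ht : t < a / (a - b)) :
    0 < a * (a + t * (b - a)) := by
  rcases mul_neg_iff.1 h with ⟨ha, hb⟩ | ⟨ha, hb⟩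
  · have hd : 0 < a - b := by linarith
    rw [lt_div_iff₀ hd] at ht
    nlinarith
  · have hd : a - b < 0 := by linarith
    rw [lt_div_iff_of_neg hd] at ht
    nlinarith

private lemma seg_sign_gt {a b t : ℝ} (h : a * b < 0) (ht : a / (a - b) < t) :
    0 < b * (a + t * (b - a)) := by
  rcases mul_neg_iff.1 h with ⟨ha, hb⟩ | ⟨ha, hb⟩
  · have hd : 0 < a - b := by linarith
    rw [div_lt_iff₀ hd] at ht
    nlinarith
  · have hd : a - b < 0 := by linarith
    rw [div_lt_iff_of_neg hd] at ht
    nlinarith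

private lemma sign_if {cw : Bool} {a val : ℝ} (h : 0 < a * val)
    (ha : if cw then 0 < a else a < 0) : if cw then 0 < val else val < 0 := by
  cases cw <;> simp_all <;> nlinarith

private lemma sep_sign_lt {A : Finset (V n)} {c d : V n → Bool} {p q v : V n}
    (hp : Realizes A c p) (hq : Realizes A d q) (hv : v ∈ A) (hne : c v ≠ d v) :
    (v ⬝ᵥ p) * (v ⬝ᵥ q) < 0 := by
  cases hc : c v <;> cases hd : d v
  · exact absurd (hc.trans hd.symm) hne
  · exact mul_neg_of_neg_of_pos (realizes_negval hp hv hc) (realizes_pos hq hv hd)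
  · exact mul_neg_of_pos_of_neg (realizes_pos hp hv hc) (realizes_negval hq hv hd)
  · exact absurd (hc.trans hd.symm) hne

private lemma sep_sign_pos {A : Finset (V n)} {c d : V n → Bool} {p q v : V n}
    (hp : Realizes A c p) (hq : Realizes A d q) (hv : v ∈ A) (heq : c v = d v) :
    0 < (v ⬝ᵥ p) * (v ⬝ᵥ q) := by
  cases hc : c v <;> cases hd : d v
  · exact mul_pos_of_neg_of_neg (realizes_negval hp hv hc) (realizes_negval hq hv hd)
  · exact absurd (heq.symm.trans hc) (by rw [hd]; simp)
  · exact absurd (heq.symm.trans hc) (by rw [hd]; simp)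
  · exact mul_pos (realizes_pos hp hv hc) (realizes_pos hq hv hd)



noncomputable def bflip (c : V n → Bool) (H : V n) : V n → Bool :=
  fun v => if v = H then !(c v) else c v

noncomputable def glue (L : Finset (V n)) (e c : V n → Bool) : V n → Bool :=
  fun v => if v ∈ L then e v else c v

private lemma codim2_of_ne {A : Finset (V n)} (hA : IsArrangement A) {u w : V n}
    (hu : u ∈ A) (hw : w ∈ A) (huw : u ≠ w) : Codim2 A u w :=
  ⟨hu, hw, LinearIndependent.pair_iff.mpr fun s t hst => not_dep hA hu hw huw hst⟩

private lemma cross {B : Finset (V n)} (hB : IsArrangement B) {c d : V n → Bool}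
    (hc : IsChamber B c) (hd : IsChamber B d) (hne : (SepSet B c d).Nonempty) :
    ∃ H ∈ SepSet B c d, IsWall B c H ∧ IsChamber B (bflip c H) := by
  classical
  obtain ⟨q, hq⟩ := hd
  have hq0 : ∀ v ∈ B, v ⬝ᵥ q ≠ 0 := fun v hv => realizes_ne hq hv
  obtain ⟨p0, hp0⟩ := hc
  set Λ : Finset (V n) :=
    ((B ×ˢ B).filter (fun vw => vw.1 ≠ vw.2)).image
      (fun vw => (vw.2 ⬝ᵥ q) • vw.1 - (vw.1 ⬝ᵥ q) • vw.2) with hΛ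
  have hΛ0 : ∀ l ∈ Λ, l ≠ 0 := by
    intro l hl
    simp only [hΛ, Finset.mem_image, Finset.mem_filter, Finset.mem_product] at hl
    obtain ⟨⟨v, w⟩, ⟨⟨hv, hw⟩, hvw⟩, rfl⟩ := hl
    intro h0
    have h1 : (w ⬝ᵥ q) • v + (-(v ⬝ᵥ q)) • w = 0 := by
      rw [neg_smul, ← sub_eq_add_neg]; exact h0
    exact hq0 w hw (not_dep hB hv hw hvw h1).1
  obtain ⟨p, hp, hgen0⟩ := exists_generic hp0 Λ hΛ0
  have hgen : ∀ v ∈ B, ∀ w ∈ B, v ≠ w → ∀ t : ℝ,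
      v ⬝ᵥ (p + t • (q - p)) = 0 → w ⬝ᵥ (p + t • (q - p)) ≠ 0 := by
    intro v hv w hw hvw t hv0 hw0
    have hlΛ : (w ⬝ᵥ q) • v - (v ⬝ᵥ q) • w ∈ Λ := by
      simp only [hΛ, Finset.mem_image, Finset.mem_filter, Finset.mem_product]
      exact ⟨(v, w), ⟨⟨hv, hw⟩, hvw⟩, rfl⟩
    have hlp := hgen0 _ hlΛ
    have hlz : ((w ⬝ᵥ q) • v - (v ⬝ᵥ q) • w) ⬝ᵥ (p + t • (q - p)) = 0 := by
      rw [sub_dotProduct, smul_dotProduct, smul_dotProduct,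
        hv0, hw0]
      simp
    have hlq : ((w ⬝ᵥ q) • v - (v ⬝ᵥ q) • w) ⬝ᵥ q = 0 := by
      rw [sub_dotProduct, smul_dotProduct, smul_dotProduct]
      simp [smul_eq_mul]; ring
    rw [dot_seg, hlq] at hlz
    have hlz2 : (1 - t) * (((w ⬝ᵥ q) • v - (v ⬝ᵥ q) • w) ⬝ᵥ p) = 0 := by
      linear_combination hlz
    rcases mul_eq_zero.1 hlz2 with h | h
    · have ht1 : t = 1 := by linarith
      rw [ht1] at hv0
      simp only [one_smul, add_sub_cancel] at hv0
      exact hq0 v hv hv0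
    · exact hlp h
  have hdotz : ∀ (v : V n) (t : ℝ), v ⬝ᵥ (p + t • (q - p)) = v ⬝ᵥ p + t * (v ⬝ᵥ q - v ⬝ᵥ p) :=
    fun v t => dot_seg v p q t
  set tf : V n → ℝ := fun v => (v ⬝ᵥ p) / (v ⬝ᵥ p - v ⬝ᵥ q) with htf
  obtain ⟨H, hH, hHmin⟩ := Finset.exists_min_image (SepSet B c d) tf hne
  obtain ⟨hHB, hHcd⟩ := mem_sep.1 hH
  have hHop : (H ⬝ᵥ p) * (H ⬝ᵥ q) < 0 := sep_sign_lt hp hq hHB hHcd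
  have htH := cross_pos hHop
  have hHz : H ⬝ᵥ (p + tf H • (q - p)) = 0 := by rw [hdotz]; exact cross_zero hHop
  have hstrict : ∀ v ∈ SepSet B c d, v ≠ H → tf H < tf v := by
    intro v hv hvH
    rcases lt_or_eq_of_le (hHmin v hv) with h | h
    · exact h
    · exfalso
      obtain ⟨hvB, hvcd⟩ := mem_sep.1 hv
      have hvop := sep_sign_lt hp hq hvB hvcd
      have hvz : v ⬝ᵥ (p + tf v • (q - p)) = 0 := by rw [hdotz]; exact cross_zero hvop
      rw [← h] at hvz
      exact hgen H hHB v hvB (Ne.symm hvH) (tf H) hHz hvz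
  have hsignt : ∀ t : ℝ, 0 ≤ t → t ≤ 1 → (∀ v ∈ SepSet B c d, v ≠ H → t < tf v) →
      ∀ w' ∈ B, w' ≠ H → (if c w' then 0 < w' ⬝ᵥ (p + t • (q - p))
        else w' ⬝ᵥ (p + t • (q - p)) < 0) := by
    intro t ht0 ht1 hlt w' hw'B hw'H
    by_cases hw' : w' ∈ SepSet B c d
    · have hop := sep_sign_lt hp hq hw'B (mem_sep.1 hw').2
      refine sign_if ?_ (hp w' hw'B)
      rw [hdotz]
      exact seg_sign_lt hop ht0 (hlt w' hw' hw'H)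
    · have hceq : c w' = d w' := by
        by_contra hcc; exact hw' (mem_sep.2 ⟨hw'B, hcc⟩)
      refine sign_if ?_ (hp w' hw'B)
      rw [hdotz]
      exact seg_sign_same (sep_sign_pos hp hq hw'B hceq) ht0 ht1
  have hwall : IsWall B c H := by
    refine ⟨hHB, p + tf H • (q - p), hHz, ?_⟩
    intro w' hw' hs
    have hw'H : w' ≠ H := by
      intro h; exact hs (by rw [h]; exact sameHyp_refl H)
    exact hsignt (tf H) htH.1.le htH.2.le hstrict w' hw' hw'H
  set T' : Finset ℝ := insert 1 (((SepSet B c d).erase H).image tf) with hT'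
  have hT'ne : T'.Nonempty := ⟨1, Finset.mem_insert_self _ _⟩
  have hlt1 : tf H < T'.min' hT'ne := by
    rw [Finset.lt_min'_iff]
    intro y hy
    rcases Finset.mem_insert.1 hy with rfl | hy
    · exact htH.2
    · obtain ⟨v, hv, rfl⟩ := Finset.mem_image.1 hy
      exact hstrict v (Finset.mem_of_mem_erase hv) (Finset.ne_of_mem_erase hv)
  have ht₁le : T'.min' hT'ne ≤ 1 := Finset.min'_le _ _ (Finset.mem_insert_self _ _)
  set t' := (tf H + T'.min' hT'ne) / 2 with ht'
  have h1 : tf H < t' := by rw [ht']; linarith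
  have h2 : t' < T'.min' hT'ne := by rw [ht']; linarith
  have h3 : 0 ≤ t' := by linarith [htH.1]
  have h4 : t' ≤ 1 := by linarith
  refine ⟨H, hH, hwall, p + t' • (q - p), ?_⟩
  intro v hvB
  by_cases hvH : v = H
  · subst hvH
    have hdv : d v = !(c v) := by
      cases hcv : c v <;> cases hdv : d v <;> rw [hcv, hdv] at hHcd <;> simp_all
    have hqv := hq v hvB
    rw [hdv] at hqv
    have hres : if (!(c v)) then 0 < v ⬝ᵥ (p + t' • (q - p))
        else v ⬝ᵥ (p + t' • (q - p)) < 0 := by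
      refine sign_if ?_ hqv
      rw [hdotz]
      exact seg_sign_gt hHop h1
    simpa [bflip] using hres
  · have hres := hsignt t' h3 h4
      (fun v' hv' hv'H => lt_of_lt_of_le h2 (Finset.min'_le _ _
        (Finset.mem_insert_of_mem (Finset.mem_image_of_mem tf (Finset.mem_erase.2 ⟨hv'H, hv'⟩)))))
      v hvB hvH
    simpa [bflip, hvH] using hres


private lemma wall_congr {B : Finset (V n)} {c c' : V n → Bool} {v : V n}
    (h : ∀ u ∈ B, c u = c' u) (hw : IsWall B c v) : IsWall B c' v := by
  obtain ⟨hv, x, hx0, hx⟩ := hw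
  exact ⟨hv, x, hx0, fun w hwA hs => by rw [← h w hwA]; exact hx w hwA hs⟩

private lemma wall_loc {A : Finset (V n)} {u w : V n} {c : V n → Bool} {v : V n}
    (hw : IsWall A c v) (hv : v ∈ loc A u w) : IsWall (loc A u w) c v := by
  obtain ⟨_, x, hx0, hx⟩ := hw
  exact ⟨hv, x, hx0, fun w' hw' hs => hx w' (Finset.filter_subset _ _ hw') hs⟩

private lemma wall_of_adjacent {A : Finset (V n)} {c d : V n → Bool} {p q H : V n}
    (hp : Realizes A c p) (hq : Realizes A d q)
    (hsep : SepSet A c d = {H}) : IsWall A c H := by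
  have hH : H ∈ SepSet A c d := by rw [hsep]; exact Finset.mem_singleton_self H
  obtain ⟨hHA, hHne⟩ := mem_sep.1 hH
  have hop : (H ⬝ᵥ p) * (H ⬝ᵥ q) < 0 := sep_sign_lt hp hq hHA hHne
  have h01 := cross_pos hop
  refine ⟨hHA, p + ((H ⬝ᵥ p) / (H ⬝ᵥ p - H ⬝ᵥ q)) • (q - p), ?_, ?_⟩
  · rw [dot_seg]; exact cross_zero hop
  · intro v hv hs
    have hvH : v ≠ H := by
      intro h; exact hs (by rw [h]; exact sameHyp_refl H)
    have hvsep : v ∉ SepSet A c d := by rw [hsep]; simpa using hvH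
    have hceq : c v = d v := by by_contra hne; exact hvsep (mem_sep.2 ⟨hv, hne⟩)
    refine sign_if ?_ (hp v hv)
    rw [dot_seg]
    exact seg_sign_same (sep_sign_pos hp hq hv hceq) h01.1.le h01.2.le

private lemma bool_eq_not_of_ne : ∀ a b : Bool, a ≠ b → a = !b := by decide

private lemma bool_ne_not_of_eq : ∀ a b : Bool, a = b → a ≠ !b := by decide

private lemma sep_flip_insert {B : Finset (V n)} {c₀ c : V n → Bool} {H : V n}
    (hH : H ∈ B) (h : c₀ H = c H) :
    SepSet B c₀ (bflip c H) = insert H (SepSet B c₀ c) := by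
  ext v
  rcases eq_or_ne v H with rfl | hv
  · have hb : bflip c v v = !(c v) := if_pos rfl
    constructor
    · intro _; exact Finset.mem_insert_self _ _
    · intro _
      refine mem_sep.2 ⟨hH, ?_⟩
      rw [hb]
      exact bool_ne_not_of_eq _ _ h
  · have hb : bflip c H v = c v := if_neg hv
    constructor
    · intro hmem
      obtain ⟨hvB, hne⟩ := mem_sep.1 hmem
      rw [hb] at hne
      exact Finset.mem_insert_of_mem (mem_sep.2 ⟨hvB, hne⟩)
    · intro hmem
      rcases Finset.mem_insert.1 hmem with rfl | hmem
      · exact absurd rfl hv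
      · obtain ⟨hvB, hne⟩ := mem_sep.1 hmem
        exact mem_sep.2 ⟨hvB, by rw [hb]; exact hne⟩

private lemma sep_flip_erase {B : Finset (V n)} {c₀ c : V n → Bool} {H : V n}
    (h : c₀ H ≠ c H) :
    SepSet B c₀ (bflip c H) = (SepSet B c₀ c).erase H := by
  ext v
  rcases eq_or_ne v H with rfl | hv
  · have hb : bflip c v v = !(c v) := if_pos rfl
    constructor
    · intro hmem
      obtain ⟨_, hne⟩ := mem_sep.1 hmem
      rw [hb] at hne
      exact absurd (bool_eq_not_of_ne _ _ h) hne
    · intro hmem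
      exact absurd hmem (Finset.notMem_erase _ _)
  · have hb : bflip c H v = c v := if_neg hv
    constructor
    · intro hmem
      obtain ⟨hvB, hne⟩ := mem_sep.1 hmem
      rw [hb] at hne
      exact Finset.mem_erase.2 ⟨hv, mem_sep.2 ⟨hvB, hne⟩⟩
    · intro hmem
      obtain ⟨hvB, hne⟩ := mem_sep.1 (Finset.mem_of_mem_erase hmem)
      exact mem_sep.2 ⟨hvB, by rw [hb]; exact hne⟩

private lemma loc_subset (A : Finset (V n)) (u w : V n) : loc A u w ⊆ A :=
  Finset.filter_subset _ _

private lemma mem_loc {A : Finset (V n)} {u w v : V n} :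
    v ∈ loc A u w ↔ v ∈ A ∧ ∀ x, u ⬝ᵥ x = 0 → w ⬝ᵥ x = 0 → v ⬝ᵥ x = 0 := by
  simp [loc]

private lemma self_mem_loc_left {A : Finset (V n)} {u w : V n} (hu : u ∈ A) :
    u ∈ loc A u w := mem_loc.2 ⟨hu, fun _ h _ => h⟩

private lemma self_mem_loc_right {A : Finset (V n)} {u w : V n} (hw : w ∈ A) :
    w ∈ loc A u w := mem_loc.2 ⟨hw, fun _ _ h => h⟩

private lemma sep_loc {A : Finset (V n)} (u w : V n) (c₀ c : V n → Bool) :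
    SepSet A c₀ c ∩ loc A u w = SepSet (loc A u w) c₀ c := by
  ext v
  simp only [Finset.mem_inter, mem_sep, mem_loc]
  tauto

private lemma exists_coeff {u w v : V n}
    (hindep : ∀ a b : ℝ, a • u + b • w = 0 → a = 0 ∧ b = 0)
    (hker : ∀ x, u ⬝ᵥ x = 0 → w ⬝ᵥ x = 0 → v ⬝ᵥ x = 0) :
    ∃ a b : ℝ, v = a • u + b • w := by
  have hu0 : u ≠ 0 := by
    intro h
    exact one_ne_zero (hindep 1 0 (by simp [h])).1
  have huu : 0 < u ⬝ᵥ u := dot_self_pos hu0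
  have hr' : ((u ⬝ᵥ u) • w - (u ⬝ᵥ w) • u) ≠ 0 := by
    intro h
    have h1 : (-(u ⬝ᵥ w)) • u + (u ⬝ᵥ u) • w = 0 := by
      rw [neg_smul, add_comm, ← sub_eq_add_neg]; exact h
    exact (ne_of_gt huu) (hindep _ _ h1).2
  have hΔpos : 0 < (u ⬝ᵥ u) * (w ⬝ᵥ w) - (u ⬝ᵥ w) * (u ⬝ᵥ w) := by
    have h2 := dot_self_pos hr'
    have h3 : ((u ⬝ᵥ u) • w - (u ⬝ᵥ w) • u) ⬝ᵥ ((u ⬝ᵥ u) • w - (u ⬝ᵥ w) • u)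
        = (u ⬝ᵥ u) * ((u ⬝ᵥ u) * (w ⬝ᵥ w) - (u ⬝ᵥ w) * (u ⬝ᵥ w)) := by
      rw [sub_dotProduct, smul_dotProduct, smul_dotProduct,
        dotProduct_sub, dotProduct_sub, dotProduct_smul,
        dotProduct_smul, dotProduct_smul, dotProduct_smul,
        dotProduct_comm w u]
      simp only [smul_eq_mul]
      ring
    rw [h3] at h2
    nlinarith
  set Δ := (u ⬝ᵥ u) * (w ⬝ᵥ w) - (u ⬝ᵥ w) * (u ⬝ᵥ w) with hΔ
  set a := ((w ⬝ᵥ w) * (u ⬝ᵥ v) - (u ⬝ᵥ w) * (w ⬝ᵥ v)) / Δ with ha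
  set b := ((u ⬝ᵥ u) * (w ⬝ᵥ v) - (u ⬝ᵥ w) * (u ⬝ᵥ v)) / Δ with hb
  have hΔ0 : Δ ≠ 0 := ne_of_gt hΔpos
  have hur : u ⬝ᵥ (v - a • u - b • w) = 0 := by
    rw [dotProduct_sub, dotProduct_sub, dotProduct_smul,
      dotProduct_smul]
    simp only [smul_eq_mul, ha, hb]
    rw [dotProduct_comm u v]
    field_simp
    ring
  have hwr : w ⬝ᵥ (v - a • u - b • w) = 0 := by
    rw [dotProduct_sub, dotProduct_sub, dotProduct_smul,
      dotProduct_smul]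
    simp only [smul_eq_mul, ha, hb]
    rw [dotProduct_comm w v, dotProduct_comm w u]
    field_simp
    ring
  have hvr : v ⬝ᵥ (v - a • u - b • w) = 0 := hker _ hur hwr
  have hrr : (v - a • u - b • w) ⬝ᵥ (v - a • u - b • w) = 0 := by
    rw [sub_dotProduct, sub_dotProduct, smul_dotProduct,
      smul_dotProduct, hvr]
    rw [dotProduct_comm u, dotProduct_comm w] at *
    rw [hur, hwr]
    simp
  have hr0 : v - a • u - b • w = 0 := dotProduct_self_eq_zero.1 hrr
  exact ⟨a, b, by rw [← sub_eq_zero]; rw [sub_sub] at hr0; exact hr0⟩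

private lemma loc_ker {A : Finset (V n)} (hA : IsArrangement A) {u w v₁ v₂ v₃ : V n}
    (hindep : ∀ a b : ℝ, a • u + b • w = 0 → a = 0 ∧ b = 0)
    (h1 : v₁ ∈ loc A u w) (h2 : v₂ ∈ loc A u w) (h3 : v₃ ∈ loc A u w) (h12 : v₁ ≠ v₂) :
    ∀ x, v₁ ⬝ᵥ x = 0 → v₂ ⬝ᵥ x = 0 → v₃ ⬝ᵥ x = 0 := by
  obtain ⟨h1A, h1k⟩ := mem_loc.1 h1
  obtain ⟨h2A, h2k⟩ := mem_loc.1 h2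
  obtain ⟨h3A, h3k⟩ := mem_loc.1 h3
  obtain ⟨a₁, b₁, he₁⟩ := exists_coeff hindep h1k
  obtain ⟨a₂, b₂, he₂⟩ := exists_coeff hindep h2k
  obtain ⟨a₃, b₃, he₃⟩ := exists_coeff hindep h3k
  intro x hx1 hx2
  have e1 : a₁ * (u ⬝ᵥ x) + b₁ * (w ⬝ᵥ x) = 0 := by
    rw [he₁, add_dotProduct, smul_dotProduct, smul_dotProduct] at hx1
    simpa [smul_eq_mul] using hx1
  have e2 : a₂ * (u ⬝ᵥ x) + b₂ * (w ⬝ᵥ x) = 0 := by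
    rw [he₂, add_dotProduct, smul_dotProduct, smul_dotProduct] at hx2
    simpa [smul_eq_mul] using hx2
  have hdet : a₁ * b₂ - a₂ * b₁ ≠ 0 := by
    intro hd
    have hz : b₂ • v₁ + (-b₁) • v₂ = (a₁ * b₂ - a₂ * b₁) • u := by
      rw [he₁, he₂]
      rw [smul_add, smul_add, neg_smul, smul_smul, smul_smul, smul_smul, smul_smul,
        sub_smul, mul_smul]
      module
    rw [hd, zero_smul] at hz
    obtain ⟨hb₂, hb₁⟩ := not_dep hA h1A h2A h12 hz
    rw [neg_eq_zero] at hb₁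
    rw [hb₁, zero_smul, add_zero] at he₁
    rw [hb₂, zero_smul, add_zero] at he₂
    have hz2 : a₂ • v₁ + (-a₁) • v₂ = 0 := by
      rw [he₁, he₂, smul_smul, neg_smul, smul_smul]
      rw [← sub_eq_add_neg, ← sub_smul]
      rw [show a₂ * a₁ - a₁ * a₂ = 0 by ring, zero_smul]
    obtain ⟨ha₂, ha₁⟩ := not_dep hA h1A h2A h12 hz2
    rw [neg_eq_zero] at ha₁
    rw [ha₁, zero_smul] at he₁
    exact hA.1 v₁ h1A he₁
  have hα : u ⬝ᵥ x = 0 := by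
    have h5 : (a₁ * b₂ - a₂ * b₁) * (u ⬝ᵥ x) = 0 := by
      linear_combination b₂ * e1 - b₁ * e2
    exact (mul_eq_zero.1 h5).resolve_left hdet
  have hβ : w ⬝ᵥ x = 0 := by
    have h5 : (a₁ * b₂ - a₂ * b₁) * (w ⬝ᵥ x) = 0 := by
      linear_combination a₁ * e2 - a₂ * e1
    exact (mul_eq_zero.1 h5).resolve_left hdet
  rw [he₃, add_dotProduct, smul_dotProduct, smul_dotProduct, hα, hβ]
  simp

private lemma sign_mul_pos {s t x k : ℝ} (hs : s = 1 ∨ s = -1) (ht : t = 1 ∨ t = -1)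
    (h1 : 0 < s * x) (h2 : 0 < t * (k * x)) : 0 < (t * s) * k := by
  rcases hs with rfl | rfl <;> rcases ht with rfl | rfl <;> nlinarith

private lemma atMostTwo {A : Finset (V n)} (hA : IsArrangement A) {u w : V n}
    (hu : u ∈ A) (hw : w ∈ A) (huw : u ≠ w) {b : V n → Bool} {v₁ v₂ v₃ : V n}
    (h1 : IsWall (loc A u w) b v₁) (h2 : IsWall (loc A u w) b v₂)
    (h3 : IsWall (loc A u w) b v₃)
    (h12 : v₁ ≠ v₂) (h13 : v₁ ≠ v₃) (h23 : v₂ ≠ v₃) : False := by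
  have hindep : ∀ a b : ℝ, a • u + b • w = 0 → a = 0 ∧ b = 0 :=
    fun a b h => not_dep hA hu hw huw h
  obtain ⟨hm1, x₁, hx₁0, hs₁⟩ := h1
  obtain ⟨hm2, x₂, hx₂0, hs₂⟩ := h2
  obtain ⟨hm3, x₃, hx₃0, hs₃⟩ := h3
  have hL : IsArrangement (loc A u w) := arr_subset hA (loc_subset A u w)
  have hker := loc_ker hA hindep hm1 hm2 hm3 h12
  have h1A := loc_subset A u w hm1
  have h2A := loc_subset A u w hm2
  obtain ⟨a, bb, hv3⟩ := exists_coeff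
    (fun s t h => not_dep hA h1A h2A h12 h) hker
  have hns : ∀ {y y' : V n}, y ∈ loc A u w → y' ∈ loc A u w → y ≠ y' → ¬ SameHyp y y' := by
    intro y y' hy hy' hne hs
    exact hne (hL.2 y hy y' hy' hs)
  set s₁ : ℝ := if b v₁ then 1 else -1 with hs₁d
  set s₂ : ℝ := if b v₂ then 1 else -1 with hs₂d
  set s₃ : ℝ := if b v₃ then 1 else -1 with hs₃d
  have hgood : ∀ (y : V n) (hy : y ∈ loc A u w) (x : V n) (s : ℝ),
      s = (if b y then 1 else -1) →
      (if b y then 0 < y ⬝ᵥ x else y ⬝ᵥ x < 0) → 0 < s * (y ⬝ᵥ x) := by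
    intro y hy x s hsdef hsign
    cases hby : b y <;> rw [hby] at hsdef hsign <;> simp at hsdef hsign <;>
      rw [hsdef] <;> nlinarith
  have hP21 : 0 < s₂ * (v₂ ⬝ᵥ x₁) :=
    hgood v₂ hm2 x₁ s₂ hs₂d (hs₁ v₂ hm2 (hns hm1 hm2 h12))
  have hP31 : 0 < s₃ * (v₃ ⬝ᵥ x₁) :=
    hgood v₃ hm3 x₁ s₃ hs₃d (hs₁ v₃ hm3 (hns hm1 hm3 h13))
  have hP12 : 0 < s₁ * (v₁ ⬝ᵥ x₂) :=
    hgood v₁ hm1 x₂ s₁ hs₁d (hs₂ v₁ hm1 (hns hm2 hm1 h12.symm))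
  have hP32 : 0 < s₃ * (v₃ ⬝ᵥ x₂) :=
    hgood v₃ hm3 x₂ s₃ hs₃d (hs₂ v₃ hm3 (hns hm2 hm3 h23))
  have hP13 : 0 < s₁ * (v₁ ⬝ᵥ x₃) :=
    hgood v₁ hm1 x₃ s₁ hs₁d (hs₃ v₁ hm1 (hns hm3 hm1 h13.symm))
  have hP23 : 0 < s₂ * (v₂ ⬝ᵥ x₃) :=
    hgood v₂ hm2 x₃ s₂ hs₂d (hs₃ v₂ hm2 (hns hm3 hm2 h23.symm))
  have e1 : v₃ ⬝ᵥ x₁ = bb * (v₂ ⬝ᵥ x₁) := by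
    rw [hv3, add_dotProduct, smul_dotProduct, smul_dotProduct, hx₁0]
    simp [smul_eq_mul]
  have e2 : v₃ ⬝ᵥ x₂ = a * (v₁ ⬝ᵥ x₂) := by
    rw [hv3, add_dotProduct, smul_dotProduct, smul_dotProduct, hx₂0]
    simp [smul_eq_mul]
  have e3 : a * (v₁ ⬝ᵥ x₃) + bb * (v₂ ⬝ᵥ x₃) = 0 := by
    rw [hv3, add_dotProduct, smul_dotProduct, smul_dotProduct] at hx₃0
    simpa [smul_eq_mul] using hx₃0
  have hor : ∀ s : ℝ, s = 1 ∨ s = -1 → s * s = 1 := by rintro s (rfl | rfl) <;> norm_num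
  have hs1or : s₁ = 1 ∨ s₁ = -1 := by rw [hs₁d]; split <;> simp
  have hs2or : s₂ = 1 ∨ s₂ = -1 := by rw [hs₂d]; split <;> simp
  have hs3or : s₃ = 1 ∨ s₃ = -1 := by rw [hs₃d]; split <;> simp
  have hb' : 0 < (s₃ * s₂) * bb :=
    sign_mul_pos hs2or hs3or hP21 (by rw [← e1]; exact hP31)
  have ha' : 0 < (s₃ * s₁) * a :=
    sign_mul_pos hs1or hs3or hP12 (by rw [← e2]; exact hP32)
  have k1 : 0 < s₃ * (a * (v₁ ⬝ᵥ x₃)) := by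
    have h := mul_pos ha' hP13
    have hre : (s₃ * s₁) * a * (s₁ * (v₁ ⬝ᵥ x₃)) = (s₃ * (a * (v₁ ⬝ᵥ x₃))) * (s₁ * s₁) := by
      ring
    rw [hre, hor s₁ hs1or, mul_one] at h
    exact h
  have k2 : 0 < s₃ * (bb * (v₂ ⬝ᵥ x₃)) := by
    have h := mul_pos hb' hP23
    have hre : (s₃ * s₂) * bb * (s₂ * (v₂ ⬝ᵥ x₃)) = (s₃ * (bb * (v₂ ⬝ᵥ x₃))) * (s₂ * s₂) := by
      ring
    rw [hre, hor s₂ hs2or, mul_one] at h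
    exact h
  have hzero : s₃ * (a * (v₁ ⬝ᵥ x₃)) + s₃ * (bb * (v₂ ⬝ᵥ x₃)) = 0 := by
    rw [← mul_add, e3, mul_zero]
  linarith

private lemma glue_chamber {A : Finset (V n)} {c : V n → Bool} {u w : V n}
    (hinc : IncidentLoc A c u w) {e : V n → Bool} (he : IsChamber (loc A u w) e) :
    IsChamber A (glue (loc A u w) e c) := by
  obtain ⟨z, hz0, hzoff⟩ := hinc
  obtain ⟨ξ, hξ⟩ := he
  obtain ⟨ε, hε, hp⟩ := small_perturb (A \ loc A u w) z ξ (fun v hv => by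
      obtain ⟨hvA, hvL⟩ := Finset.mem_sdiff.1 hv
      have h1 := hzoff v hvA hvL
      by_cases hcv : c v = true
      · rw [if_pos hcv] at h1; exact ne_of_gt h1
      · rw [if_neg hcv] at h1; exact ne_of_lt h1)
  refine ⟨z + ε • ξ, ?_⟩
  intro v hv
  by_cases hvL : v ∈ loc A u w
  · have hdd : v ⬝ᵥ (z + ε • ξ) = ε * (v ⬝ᵥ ξ) := by
      rw [dotProduct_add, dotProduct_smul, hz0 v hvL]
      simp [smul_eq_mul]
    have h1 := hξ v hvL
    have hgv : glue (loc A u w) e c v = e v := if_pos hvL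
    rw [hgv, hdd]
    cases hev : e v <;> rw [hev] at h1 <;>
      simp only [if_true, if_false, ite_true, ite_false, Bool.false_eq_true] at h1 ⊢
    · exact mul_neg_of_pos_of_neg hε h1
    · exact mul_pos hε h1
  · have hsgn := hp ε hε le_rfl v (Finset.mem_sdiff.2 ⟨hv, hvL⟩)
    have h1 := hzoff v hv hvL
    have hgv : glue (loc A u w) e c v = c v := if_neg hvL
    rw [hgv]
    cases hcv : c v <;> rw [hcv] at h1 <;>
      simp only [if_true, if_false, ite_true, ite_false, Bool.false_eq_true] at h1 ⊢
    · exact hsgn.2 h1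
    · exact hsgn.1 h1

private lemma glue_wall {A : Finset (V n)} {c : V n → Bool} {u w : V n}
    (hinc : IncidentLoc A c u w) {e : V n → Bool} {v : V n}
    (hwall : IsWall (loc A u w) e v) : IsWall A (glue (loc A u w) e c) v := by
  obtain ⟨hvL, ξ, hξ0, hξ⟩ := hwall
  obtain ⟨z, hz0, hzoff⟩ := hinc
  obtain ⟨ε, hε, hp⟩ := small_perturb (A \ loc A u w) z ξ (fun v' hv' => by
      obtain ⟨hvA, hvL'⟩ := Finset.mem_sdiff.1 hv'
      have h1 := hzoff v' hvA hvL'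
      by_cases hcv : c v' = true
      · rw [if_pos hcv] at h1; exact ne_of_gt h1
      · rw [if_neg hcv] at h1; exact ne_of_lt h1)
  refine ⟨loc_subset A u w hvL, z + ε • ξ, ?_, ?_⟩
  · rw [dotProduct_add, dotProduct_smul, hz0 v hvL, hξ0]
    simp
  · intro w' hw' hs
    by_cases hw'L : w' ∈ loc A u w
    · have h1 := hξ w' hw'L hs
      have hdd : w' ⬝ᵥ (z + ε • ξ) = ε * (w' ⬝ᵥ ξ) := by
        rw [dotProduct_add, dotProduct_smul, hz0 w' hw'L]
        simp [smul_eq_mul]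
      have hgv : glue (loc A u w) e c w' = e w' := if_pos hw'L
      rw [hgv, hdd]
      cases hev : e w' <;> rw [hev] at h1 <;>
        simp only [if_true, if_false, ite_true, ite_false, Bool.false_eq_true] at h1 ⊢
      · exact mul_neg_of_pos_of_neg hε h1
      · exact mul_pos hε h1
    · have hsgn := hp ε hε le_rfl w' (Finset.mem_sdiff.2 ⟨hw', hw'L⟩)
      have h1 := hzoff w' hw' hw'L
      have hgv : glue (loc A u w) e c w' = c w' := if_neg hw'L
      rw [hgv]
      cases hcv : c w' <;> rw [hcv] at h1 <;>
        simp only [if_true, if_false, ite_true, ite_false, Bool.false_eq_true] at h1 ⊢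
      · exact hsgn.2 h1
      · exact hsgn.1 h1

private lemma sep_glue {A : Finset (V n)} {c₀ c e : V n → Bool} {u w : V n}
    (hdisj : ∀ v ∈ SepSet A c₀ c, v ∉ loc A u w) :
    SepSet A c₀ (glue (loc A u w) e c) = SepSet A c₀ c ∪ SepSet (loc A u w) c₀ e := by
  ext v
  rw [Finset.mem_union]
  by_cases hvL : v ∈ loc A u w
  · have hg : glue (loc A u w) e c v = e v := if_pos hvL
    constructor
    · intro hmem
      obtain ⟨hvA, hne⟩ := mem_sep.1 hmem
      rw [hg] at hne
      exact Or.inr (mem_sep.2 ⟨hvL, hne⟩)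
    · rintro (hmem | hmem)
      · exact absurd hvL (hdisj v hmem)
      · obtain ⟨hvL', hne⟩ := mem_sep.1 hmem
        exact mem_sep.2 ⟨loc_subset A u w hvL', by rw [hg]; exact hne⟩
  · have hg : glue (loc A u w) e c v = c v := if_neg hvL
    constructor
    · intro hmem
      obtain ⟨hvA, hne⟩ := mem_sep.1 hmem
      rw [hg] at hne
      exact Or.inl (mem_sep.2 ⟨hvA, hne⟩)
    · rintro (hmem | hmem)
      · obtain ⟨hvA, hne⟩ := mem_sep.1 hmem
        exact mem_sep.2 ⟨hvA, by rw [hg]; exact hne⟩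
      · exact absurd (mem_sep.1 hmem).1 hvL

private lemma sep_between {A : Finset (V n)} {c₀ m m' : V n → Bool} {S : Finset (V n)}
    {u : V n} (hm : SepSet A c₀ m = S) (hm' : SepSet A c₀ m' = insert u S)
    (hu : u ∉ S) (huA : u ∈ A) : SepSet A m m' = {u} := by
  ext v
  simp only [mem_sep, Finset.mem_singleton]
  constructor
  · rintro ⟨hvA, hne⟩
    by_contra hvu
    have h1 : (v ∈ SepSet A c₀ m) ↔ (v ∈ SepSet A c₀ m') := by
      rw [hm, hm']; simp [Finset.mem_insert, hvu]
    simp only [mem_sep, hvA, true_and] at h1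
    cases hc : c₀ v <;> cases h3 : m v <;> cases h4 : m' v <;> simp_all
  · rintro rfl
    refine ⟨huA, ?_⟩
    have h1 : v ∈ SepSet A c₀ m' := by rw [hm']; exact Finset.mem_insert_self _ _
    have h2 : v ∉ SepSet A c₀ m := by rw [hm]; exact hu
    simp only [mem_sep, huA, true_and] at h1 h2
    cases hc : c₀ v <;> cases h3 : m v <;> cases h4 : m' v <;> simp_all



private def Good (A : Finset (V n)) (c₀ : V n → Bool) (J S : Finset (V n)) : Prop :=
  S ⊆ J ∧ ∃ m, IsChamber A m ∧ SepSet A c₀ m = S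

private def Step (A : Finset (V n)) (c₀ : V n → Bool) (J S T : Finset (V n)) : Prop :=
  Good A c₀ J S ∧ Good A c₀ J T ∧ ∃ v, v ∉ S ∧ T = insert v S

private lemma reach_subset {A : Finset (V n)} {c₀ : V n → Bool} {J S T : Finset (V n)}
    (h : Relation.ReflTransGen (Step A c₀ J) S T) : S ⊆ T := by
  induction h with
  | refl => exact Finset.Subset.refl _
  | tail _ hbc ih =>
    obtain ⟨_, _, v, hv, rfl⟩ := hbc
    exact ih.trans (Finset.subset_insert _ _)

private lemma reach_good {A : Finset (V n)} {c₀ : V n → Bool} {J S T : Finset (V n)}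
    (hS : Good A c₀ J S) (h : Relation.ReflTransGen (Step A c₀ J) S T) : Good A c₀ J T := by
  induction h with
  | refl => exact hS
  | tail _ hbc _ => exact hbc.2.1

private lemma from_empty {A : Finset (V n)} (hA : IsArrangement A) {c₀ : V n → Bool}
    (hc₀ : IsChamber A c₀) {J : Finset (V n)} :
    ∀ k (S : Finset (V n)), S.card ≤ k → Good A c₀ J S →
      Relation.ReflTransGen (Step A c₀ J) ∅ S := by
  intro k
  induction k with
  | zero =>
    intro S hS _
    have hSe : S = ∅ := Finset.card_eq_zero.1 (Nat.le_zero.1 hS)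
    subst hSe
    exact Relation.ReflTransGen.refl
  | succ k ih =>
    intro S hS hG
    by_cases hSe : S = ∅
    · subst hSe; exact Relation.ReflTransGen.refl
    · obtain ⟨hSJ, m, hm, hsep⟩ := hG
      have hne : (SepSet A m c₀).Nonempty := by
        rw [sep_comm, hsep]
        exact Finset.nonempty_iff_ne_empty.2 hSe
      obtain ⟨H, hH, _, hflip⟩ := cross hA hm hc₀ hne
      rw [sep_comm, hsep] at hH
      have hHS : H ∈ S := hH
      have hHsep : H ∈ SepSet A c₀ m := by rw [hsep]; exact hHS
      have hsepflip : SepSet A c₀ (bflip m H) = S.erase H := by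
        rw [sep_flip_erase (mem_sep.1 hHsep).2, hsep]
      have hGe : Good A c₀ J (S.erase H) :=
        ⟨(Finset.erase_subset _ _).trans hSJ, bflip m H, hflip, hsepflip⟩
      have hcard : (S.erase H).card ≤ k := by
        rw [Finset.card_erase_of_mem hHS]
        omega
      refine Relation.ReflTransGen.tail (ih _ hcard hGe) ?_
      exact ⟨hGe, ⟨hSJ, m, hm, hsep⟩, H, Finset.notMem_erase H S,
        (Finset.insert_erase hHS).symm⟩

private lemma lc {A : Finset (V n)} (hA : IsArrangement A) {c₀ : V n → Bool}
    (hc₀ : IsChamber A c₀) (hbn : Bineighborly A c₀) {J : Finset (V n)}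
    (hJ : Is2Closed A c₀ J) {S T₁ T₂ : Finset (V n)}
    (h1 : Step A c₀ J S T₁) (h2 : Step A c₀ J S T₂) :
    ∃ U, Relation.ReflTransGen (Step A c₀ J) T₁ U ∧
      Relation.ReflTransGen (Step A c₀ J) T₂ U := by
  obtain ⟨hGS, hGT₁, u, huS, rfl⟩ := h1
  obtain ⟨-, hGT₂, w, hwS, rfl⟩ := h2
  by_cases huw : u = w
  · subst huw
    exact ⟨insert u S, Relation.ReflTransGen.refl, Relation.ReflTransGen.refl⟩
  obtain ⟨hSJ, m, hm, hsepm⟩ := hGS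
  obtain ⟨hT₁J, m₁, hm₁, hsepm₁⟩ := hGT₁
  obtain ⟨hT₂J, m₂, hm₂, hsepm₂⟩ := hGT₂
  have huA : u ∈ A := sep_subset A c₀ m₁ (by rw [hsepm₁]; exact Finset.mem_insert_self _ _)
  have hwA : w ∈ A := sep_subset A c₀ m₂ (by rw [hsepm₂]; exact Finset.mem_insert_self _ _)
  have huJ : u ∈ J := hT₁J (Finset.mem_insert_self _ _)
  have hwJ : w ∈ J := hT₂J (Finset.mem_insert_self _ _)
  obtain ⟨p, hp⟩ := hm
  obtain ⟨p₁, hp₁⟩ := hm₁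
  obtain ⟨p₂, hp₂⟩ := hm₂
  have hwallu : IsWall A m u := wall_of_adjacent hp hp₁ (sep_between hsepm hsepm₁ huS huA)
  have hwallw : IsWall A m w := wall_of_adjacent hp hp₂ (sep_between hsepm hsepm₂ hwS hwA)
  have hup : ∀ v : V n, v ∈ A → v ∉ S → v ∈ SepSet A m (fun v' => !c₀ v') := by
    intro v hvA hvS
    refine mem_sep.2 ⟨hvA, ?_⟩
    have hc : c₀ v = m v := by
      by_contra hcc
      exact hvS (by rw [← hsepm]; exact mem_sep.2 ⟨hvA, hcc⟩)
    exact bool_ne_not_of_eq _ _ hc.symm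
  have hinc : IncidentLoc A m u w :=
    hbn m ⟨p, hp⟩ u w hwallu hwallw (hup u huA huS) (hup w hwA hwS)
  have hLA : loc A u w ⊆ A := loc_subset A u w
  have hLarr : IsArrangement (loc A u w) := arr_subset hA hLA
  have huL : u ∈ loc A u w := self_mem_loc_left huA
  have hwL : w ∈ loc A u w := self_mem_loc_right hwA
  have hmL : IsChamber (loc A u w) m := ⟨p, realizes_subset hLA hp⟩
  have hc₀L : IsChamber (loc A u w) c₀ := by
    obtain ⟨x₀, hx₀⟩ := hc₀
    exact ⟨x₀, realizes_subset hLA hx₀⟩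
  have hdisj : ∀ v ∈ S, v ∉ loc A u w := by
    intro v hvS hvL
    have hne : (SepSet (loc A u w) m c₀).Nonempty := by
      refine ⟨v, ?_⟩
      rw [sep_comm, ← sep_loc u w c₀ m]
      exact Finset.mem_inter.2 ⟨by rw [hsepm]; exact hvS, hvL⟩
    obtain ⟨H, hH, hwallH, -⟩ := cross hLarr hmL hc₀L hne
    rw [sep_comm, ← sep_loc u w c₀ m] at hH
    have hHS : H ∈ S := by rw [← hsepm]; exact (Finset.mem_inter.1 hH).1
    exact atMostTwo hA huA hwA huw (wall_loc hwallu huL) (wall_loc hwallw hwL) hwallH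
      huw (fun h => huS (h ▸ hHS)) (fun h => hwS (h ▸ hHS))
  have hdisj' : ∀ v ∈ SepSet A c₀ m, v ∉ loc A u w := by
    rw [hsepm]; exact hdisj
  have hc₀m : ∀ v ∈ loc A u w, c₀ v = m v := by
    intro v hv
    by_contra hcc
    exact hdisj v (by rw [← hsepm]; exact mem_sep.2 ⟨hLA hv, hcc⟩) hv
  have hLJ : loc A u w ⊆ J := by
    intro H hHL
    by_contra hHJ
    obtain ⟨e, heCh, hHe, hesub⟩ := hJ u w (codim2_of_ne hA huA hwA huw) H
      (Finset.mem_sdiff.2 ⟨hHL, fun hmem => hHJ (Finset.mem_inter.1 hmem).1⟩)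
    obtain ⟨G, hGe, hGwall, -⟩ := cross hLarr hc₀L heCh ⟨H, hHe⟩
    have hGm : IsWall (loc A u w) m G := wall_congr hc₀m hGwall
    have hGuw : G = u ∨ G = w := by
      by_contra hcon
      push_neg at hcon
      exact atMostTwo hA huA hwA huw (wall_loc hwallu huL) (wall_loc hwallw hwL) hGm
        huw (fun h => hcon.1 h.symm) (fun h => hcon.2 h.symm)
    have hGJ : G ∈ J := by rcases hGuw with rfl | rfl; exacts [huJ, hwJ]
    have hGsd := hesub hGe
    rw [Finset.mem_sdiff] at hGsd
    exact hGsd.2 (Finset.mem_inter.2 ⟨hGJ, hGsd.1⟩)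
  have climb : ∀ k (e : V n → Bool), IsChamber (loc A u w) e →
      ((loc A u w) \ SepSet (loc A u w) c₀ e).card ≤ k →
      Relation.ReflTransGen (Step A c₀ J) (S ∪ SepSet (loc A u w) c₀ e)
        (S ∪ loc A u w) := by
    intro k
    induction k with
    | zero =>
      intro e _ hcard
      have hfull : SepSet (loc A u w) c₀ e = loc A u w :=
        Finset.Subset.antisymm (sep_subset _ _ _)
          (by
            rw [← Finset.sdiff_eq_empty_iff_subset]
            exact Finset.card_eq_zero.1 (Nat.le_zero.1 hcard))
      rw [hfull]
    | succ k ih =>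
      intro e he hcard
      by_cases hfull : SepSet (loc A u w) c₀ e = loc A u w
      · rw [hfull]
      · have hssub : SepSet (loc A u w) c₀ e ⊂ loc A u w :=
          lt_of_le_of_ne (sep_subset _ _ _) hfull
        obtain ⟨H', hH'L, hH'S⟩ := Finset.exists_of_ssubset hssub
        have hne : (SepSet (loc A u w) e (fun v => !(c₀ v))).Nonempty := by
          refine ⟨H', mem_sep.2 ⟨hH'L, ?_⟩⟩
          have hce : c₀ H' = e H' := by
            by_contra hcc
            exact hH'S (mem_sep.2 ⟨hH'L, hcc⟩)
          exact bool_ne_not_of_eq _ _ hce.symm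
        have hnegCh : IsChamber (loc A u w) (fun v => !(c₀ v)) := by
          obtain ⟨x₀, hx₀⟩ := hc₀L
          exact ⟨-x₀, realizes_neg hx₀⟩
        obtain ⟨H, hH, _, hHflip⟩ := cross hLarr he hnegCh hne
        obtain ⟨hHL, hHne⟩ := mem_sep.1 hH
        have hce : c₀ H = e H := ((bNeNot (e H) (c₀ H)).1 hHne).symm
        have hHnotSep : H ∉ SepSet (loc A u w) c₀ e := fun hmem => (mem_sep.1 hmem).2 hce
        have hsepflip : SepSet (loc A u w) c₀ (bflip e H) =
            insert H (SepSet (loc A u w) c₀ e) := sep_flip_insert hHL hce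
        have hGe : Good A c₀ J (S ∪ SepSet (loc A u w) c₀ e) := by
          refine ⟨Finset.union_subset hSJ ((sep_subset _ _ _).trans hLJ), glue (loc A u w) e m,
            glue_chamber hinc he, ?_⟩
          rw [sep_glue hdisj', hsepm]
        have hGe' : Good A c₀ J (S ∪ SepSet (loc A u w) c₀ (bflip e H)) := by
          refine ⟨Finset.union_subset hSJ ((sep_subset _ _ _).trans hLJ),
            glue (loc A u w) (bflip e H) m, glue_chamber hinc hHflip, ?_⟩
          rw [sep_glue hdisj', hsepm]
        have hstep : Step A c₀ J (S ∪ SepSet (loc A u w) c₀ e)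
            (S ∪ SepSet (loc A u w) c₀ (bflip e H)) := by
          refine ⟨hGe, hGe', H, ?_, ?_⟩
          · rw [Finset.mem_union]
            push_neg
            exact ⟨fun hHS => hdisj H hHS hHL, hHnotSep⟩
          · rw [hsepflip, Finset.union_insert]
        have hcard' : ((loc A u w) \ SepSet (loc A u w) c₀ (bflip e H)).card ≤ k := by
          rw [hsepflip]
          have heq : (loc A u w) \ insert H (SepSet (loc A u w) c₀ e) =
              ((loc A u w) \ SepSet (loc A u w) c₀ e).erase H := by
            ext y
            simp only [Finset.mem_sdiff, Finset.mem_erase, Finset.mem_insert]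
            tauto
          rw [heq, Finset.card_erase_of_mem
            (Finset.mem_sdiff.2 ⟨hHL, hHnotSep⟩)]
          omega
        exact Relation.ReflTransGen.head hstep (ih (bflip e H) hHflip hcard')
  have happ : ∀ (m' : V n → Bool) (v : V n), IsChamber A m' →
      SepSet A c₀ m' = insert v S → v ∈ loc A u w →
      Relation.ReflTransGen (Step A c₀ J) (insert v S) (S ∪ loc A u w) := by
    intro m' v hm' hsep' hvL
    have hm'L : IsChamber (loc A u w) m' := by
      obtain ⟨px, hx⟩ := hm'
      exact ⟨px, realizes_subset hLA hx⟩
    have hsepL : SepSet (loc A u w) c₀ m' = {v} := by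
      rw [← sep_loc u w c₀ m', hsep']
      ext y
      simp only [Finset.mem_inter, Finset.mem_insert, Finset.mem_singleton]
      constructor
      · rintro ⟨rfl | hyS, hyL⟩
        · rfl
        · exact absurd hyL (hdisj y hyS)
      · rintro rfl
        exact ⟨Or.inl rfl, hvL⟩
    have hstart := climb ((loc A u w) \ SepSet (loc A u w) c₀ m').card m' hm'L le_rfl
    rw [hsepL] at hstart
    rw [show S ∪ {v} = insert v S by rw [Finset.union_comm, ← Finset.insert_eq]] at hstart
    exact hstart
  exact ⟨S ∪ loc A u w, happ m₁ u ⟨p₁, hp₁⟩ hsepm₁ huL, happ m₂ w ⟨p₂, hp₂⟩ hsepm₂ hwL⟩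

private lemma directed {A : Finset (V n)} (hA : IsArrangement A) {c₀ : V n → Bool}
    (hc₀ : IsChamber A c₀) (hbn : Bineighborly A c₀) {J : Finset (V n)}
    (hJ : Is2Closed A c₀ J) :
    ∀ k (S T₁ T₂ : Finset (V n)), (A \ S).card ≤ k →
      Relation.ReflTransGen (Step A c₀ J) S T₁ →
      Relation.ReflTransGen (Step A c₀ J) S T₂ →
      ∃ U, Relation.ReflTransGen (Step A c₀ J) T₁ U ∧
        Relation.ReflTransGen (Step A c₀ J) T₂ U := by
  intro k
  induction k with
  | zero =>
    intro S T₁ T₂ hk h1 h2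
    rcases h1.cases_head with rfl | ⟨S₁, hs₁, _⟩
    · exact ⟨T₂, h2, Relation.ReflTransGen.refl⟩
    rcases h2.cases_head with rfl | ⟨S₂, hs₂, _⟩
    · exact ⟨T₁, Relation.ReflTransGen.refl, h1⟩
    · exfalso
      obtain ⟨_, hGS₁, v, hv, rfl⟩ := hs₁
      obtain ⟨hsub, mm, hmm, hsep⟩ := hGS₁
      have hvA : v ∈ A := sep_subset A c₀ mm (by rw [hsep]; exact Finset.mem_insert_self _ _)
      have : v ∈ A \ S := Finset.mem_sdiff.2 ⟨hvA, hv⟩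
      have := Finset.card_pos.2 ⟨v, this⟩
      omega
  | succ k ih =>
    intro S T₁ T₂ hk h1 h2
    rcases h1.cases_head with rfl | ⟨S₁, hs₁, hr₁⟩
    · exact ⟨T₂, h2, Relation.ReflTransGen.refl⟩
    rcases h2.cases_head with rfl | ⟨S₂, hs₂, hr₂⟩
    · exact ⟨T₁, Relation.ReflTransGen.refl, h1⟩
    obtain ⟨Z, hz₁, hz₂⟩ := lc hA hc₀ hbn hJ hs₁ hs₂
    have hmeas : ∀ (S' : Finset (V n)), Step A c₀ J S S' → (A \ S').card ≤ k := by
      intro S' hstep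
      obtain ⟨_, hGS', v, hv, rfl⟩ := hstep
      obtain ⟨hsub, mm, hmm, hsep⟩ := hGS'
      have hvA : v ∈ A := sep_subset A c₀ mm (by rw [hsep]; exact Finset.mem_insert_self _ _)
      have heq : A \ insert v S = (A \ S).erase v := by
        ext y
        simp only [Finset.mem_sdiff, Finset.mem_erase, Finset.mem_insert]
        tauto
      rw [heq, Finset.card_erase_of_mem (Finset.mem_sdiff.2 ⟨hvA, hv⟩)]
      omega
    obtain ⟨W, hw₁, hw₂⟩ := ih S₁ T₁ Z (hmeas S₁ hs₁) hr₁ hz₁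
    obtain ⟨U, hu₁, hu₂⟩ := ih S₂ T₂ W (hmeas S₂ hs₂) hr₂ (hz₂.trans hw₂)
    exact ⟨U, hw₁.trans hu₂, hu₁⟩

end Aux

theorem bineighborly_join_twoClosure {n : ℕ} (A : Finset (V n)) (hA : IsArrangement A)
    (c₀ : V n → Bool) (hc₀ : IsChamber A c₀) (hbn : Bineighborly A c₀)
    (x y j : V n → Bool) (hx : IsChamber A x) (hy : IsChamber A y) (hj : IsChamber A j)
    (hubx : SepSet A c₀ x ⊆ SepSet A c₀ j) (huby : SepSet A c₀ y ⊆ SepSet A c₀ j)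
    (hlub : ∀ e, IsChamber A e → SepSet A c₀ x ⊆ SepSet A c₀ e →
      SepSet A c₀ y ⊆ SepSet A c₀ e → SepSet A c₀ j ⊆ SepSet A c₀ e) :
    Is2Closed A c₀ (SepSet A c₀ j) ∧
      SepSet A c₀ x ∪ SepSet A c₀ y ⊆ SepSet A c₀ j ∧
      ∀ J ⊆ A, Is2Closed A c₀ J → SepSet A c₀ x ∪ SepSet A c₀ y ⊆ J →
        SepSet A c₀ j ⊆ J := by
  classical
  refine ⟨?_, Finset.union_subset hubx huby, ?_⟩
  · intro u w _
    intro H hH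
    obtain ⟨hHL, hHI⟩ := Finset.mem_sdiff.1 hH
    have hjL : IsChamber (loc A u w) j := by
      obtain ⟨xj, hxj⟩ := hj
      exact ⟨xj, realizes_subset (loc_subset A u w) hxj⟩
    refine ⟨fun v => !(j v), ?_, ?_, ?_⟩
    · obtain ⟨xj, hxj⟩ := hjL
      exact ⟨-xj, realizes_neg hxj⟩
    · refine mem_sep.2 ⟨hHL, ?_⟩
      have hcj : c₀ H = j H := by
        by_contra hne
        exact hHI (Finset.mem_inter.2 ⟨mem_sep.2 ⟨loc_subset A u w hHL, hne⟩, hHL⟩)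
      exact bool_ne_not_of_eq _ _ hcj
    · intro v hv
      obtain ⟨hvL, hvne⟩ := mem_sep.1 hv
      refine Finset.mem_sdiff.2 ⟨hvL, fun hmem => ?_⟩
      have hne2 := (mem_sep.1 (Finset.mem_inter.1 hmem).1).2
      cases hc : c₀ v <;> cases hjv : j v <;> simp_all
  · intro J hJA hJ2 hun
    have hGx : Good A c₀ J (SepSet A c₀ x) :=
      ⟨(Finset.subset_union_left).trans hun, x, hx, rfl⟩
    have hGy : Good A c₀ J (SepSet A c₀ y) :=
      ⟨(Finset.subset_union_right).trans hun, y, hy, rfl⟩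
    have hRx := from_empty hA hc₀ (SepSet A c₀ x).card _ le_rfl hGx
    have hRy := from_empty hA hc₀ (SepSet A c₀ y).card _ le_rfl hGy
    obtain ⟨U, hU1, hU2⟩ := directed hA hc₀ hbn hJ2 ((A \ (∅ : Finset (V n))).card) ∅
      (SepSet A c₀ x) (SepSet A c₀ y) le_rfl hRx hRy
    obtain ⟨hUJ, e, he, hsepe⟩ := reach_good hGx hU1
    have hxe : SepSet A c₀ x ⊆ SepSet A c₀ e := by rw [hsepe]; exact reach_subset hU1
    have hye : SepSet A c₀ y ⊆ SepSet A c₀ e := by rw [hsepe]; exact reach_subset hU2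
    intro v hv
    exact hUJ (hsepe ▸ hlub e he hxe hye hv)
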